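/- arXiv:1602.05019 — 2 statements merged into one kernel-verified Lean document; each statement's English description precedes it below -/
import Mathlib

section
/- For all real x₁ and all real x₂ ≠ 0, the series ∑_{n=1}^∞ (1/(2πn)) e^{-2πn|x₂|} cos(2πn x₁) converges and equals (1/2)|x₂| - log(2)/(2π) - (1/(4π)) log( sinh²(π x₂) + sin²(π x₁) ). -/
open Real

/-- For all real `x₁` and all real `x₂ ≠ 0`, the series
`∑_{n=1}^∞ (1/(2πn)) e^{-2πn|x₂|} cos(2πn x₁)` converges and equals
`(1/2)|x₂| - log 2/(2π) - (1/(4π)) log(sinh²(π x₂) + sin²(π x₁))`. -/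
theorem stmt_0 (x₁ x₂ : ℝ) (hx₂ : x₂ ≠ 0) :
    HasSum
      (fun n : ℕ =>
        (1 / (2 * π * (n + 1))) * Real.exp (-2 * π * (n + 1) * |x₂|) *
          Real.cos (2 * π * (n + 1) * x₁))
      ((1 / 2) * |x₂| - Real.log 2 / (2 * π) -
        (1 / (4 * π)) * Real.log (Real.sinh (π * x₂) ^ 2 + Real.sin (π * x₁) ^ 2)) := by
  have hπ := Real.pi_pos
  obtain ⟨r, hr⟩ : ∃ r : ℝ, r = Real.exp (-(2 * π * |x₂|)) := ⟨_, rfl⟩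
  have hrpos : 0 < r := hr ▸ Real.exp_pos _
  have hx2pos : 0 < |x₂| := abs_pos.mpr hx₂
  have hr1 : r < 1 := by rw [hr, Real.exp_lt_one_iff]; nlinarith
  obtain ⟨z, hz⟩ : ∃ z : ℂ, z = (r : ℂ) * Complex.exp ((2 * π * x₁ : ℝ) * Complex.I) := ⟨_, rfl⟩
  have hznorm : ‖z‖ = r := by
    rw [hz, norm_mul, Complex.norm_exp,
      Complex.norm_real, Real.norm_eq_abs, abs_of_pos hrpos]
    simp
  have hlog := Complex.hasSum_taylorSeries_neg_log (z := z) (by rw [hznorm]; exact hr1)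
  have hre : HasSum (fun n : ℕ => (z ^ n / n : ℂ).re) (-Complex.log (1 - z)).re :=
    Complex.hasSum_re hlog
  have hterm : ∀ n : ℕ, (z ^ n / n : ℂ).re = r ^ n * Real.cos (2 * π * x₁ * n) / n := by
    intro n
    have h1 : (z ^ n / n : ℂ)
        = ((r ^ n / n : ℝ) : ℂ) * Complex.exp ((2 * π * x₁ * n : ℝ) * Complex.I) := by
      rw [hz, mul_pow, ← Complex.exp_nat_mul]
      push_cast
      rw [div_mul_eq_mul_div]
      ring_nf
    rw [h1, Complex.re_ofReal_mul, Complex.exp_ofReal_mul_I_re]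
    ring
  rw [funext hterm] at hre
  have hshift : HasSum
      (fun n : ℕ => r ^ (n + 1) * Real.cos (2 * π * x₁ * (↑(n + 1) : ℝ)) / (↑(n + 1) : ℝ))
      (-Complex.log (1 - z)).re := by
    refine (hasSum_nat_add_iff (f := fun n : ℕ => r ^ n * Real.cos (2 * π * x₁ * n) / n) 1).mpr ?_
    simpa using hre
  have hmul := hshift.mul_left (1 / (2 * π))
  obtain ⟨S, hS⟩ : ∃ S : ℝ, S = Real.sinh (π * x₂) ^ 2 + Real.sin (π * x₁) ^ 2 := ⟨_, rfl⟩
  have hSpos : 0 < S := by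
    have h1 : Real.sinh (π * x₂) ≠ 0 := by
      rw [Real.sinh_ne_zero]; positivity
    have h2 := sq_nonneg (Real.sin (π * x₁))
    have h3 : 0 < Real.sinh (π * x₂) ^ 2 := by positivity
    rw [hS]; linarith
  have habs : ‖1 - z‖ ^ 2 = 1 - 2 * r * Real.cos (2 * π * x₁) + r ^ 2 := by
    rw [Complex.sq_norm, Complex.normSq_apply]
    have hre1 : (1 - z).re = 1 - r * Real.cos (2 * π * x₁) := by
      rw [Complex.sub_re, Complex.one_re, hz, Complex.re_ofReal_mul,
        Complex.exp_ofReal_mul_I_re]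
    have him1 : (1 - z).im = -(r * Real.sin (2 * π * x₁)) := by
      rw [Complex.sub_im, Complex.one_im, hz, Complex.im_ofReal_mul,
        Complex.exp_ofReal_mul_I_im]
      ring
    rw [hre1, him1]
    nlinarith [Real.sin_sq_add_cos_sq (2 * π * x₁)]
  have hkey : 1 - 2 * r * Real.cos (2 * π * x₁) + r ^ 2 = 4 * r * S := by
    have hcos : Real.cos (2 * π * x₁) = 1 - 2 * Real.sin (π * x₁) ^ 2 := by
      have h1 := Real.cos_two_mul' (π * x₁)
      have h2 := Real.sin_sq_add_cos_sq (π * x₁)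
      have h3 : 2 * π * x₁ = 2 * (π * x₁) := by ring
      rw [h3, h1]; linarith
    obtain ⟨e, he⟩ : ∃ e : ℝ, e = Real.exp (π * |x₂|) := ⟨_, rfl⟩
    have hepos : 0 < e := he ▸ Real.exp_pos _
    have hee : e * e = r⁻¹ := by
      rw [he, ← Real.exp_add, hr, ← Real.exp_neg]
      ring_nf
    have hsinh : Real.sinh (π * x₂) ^ 2 = ((e - e⁻¹) / 2) ^ 2 := by
      have h1 : Real.sinh (π * x₂) ^ 2 = Real.sinh (π * |x₂|) ^ 2 := by
        rw [← sq_abs (Real.sinh (π * x₂)), Real.abs_sinh, abs_mul, abs_of_pos hπ]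
      rw [h1, Real.sinh_eq, Real.exp_neg, he]
    have hre' : r = (e * e)⁻¹ := by rw [hee, inv_inv]
    rw [hS, hcos, hsinh, hre']
    field_simp
    ring
  -- compute the sum value
  have hval : 1 / (2 * π) * (-Complex.log (1 - z)).re
      = (1 / 2) * |x₂| - Real.log 2 / (2 * π) - (1 / (4 * π)) * Real.log S := by
    rw [Complex.neg_re, Complex.log_re]
    have habs' : Real.log ‖1 - z‖ = (1 / 2) * Real.log (4 * r * S) := by
      have h1 : Real.log (‖1 - z‖ ^ 2) = Real.log (4 * r * S) := by
        rw [habs, hkey]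
      rw [Real.log_pow] at h1
      push_cast at h1
      linarith
    rw [habs', Real.log_mul (by positivity) (ne_of_gt hSpos),
      Real.log_mul (by norm_num) (ne_of_gt hrpos), hr, Real.log_exp,
      show (4 : ℝ) = 2 ^ 2 by norm_num, Real.log_pow]
    push_cast
    field_simp
    ring
  rw [← hS, ← hval]
  convert hmul using 2 with n
  · rfl
  have hrn : r ^ (n + 1) = Real.exp (-2 * π * (↑n + 1) * |x₂|) := by
    rw [hr, ← Real.exp_nat_mul]
    congr 1
    push_cast
    ring
  rw [hrn]
  have hn : ((n : ℝ) + 1) ≠ 0 := by positivity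
  push_cast
  field_simp
end

section
/- Define G⁺((x₁,x₂),(y₁,y₂)) = (1/(4π)) [ log( sinh²(π(x₂-y₂)) + sin²(π(x₁-y₁)) ) - log( sinh²(π(x₂+y₂)) + sin²(π(x₁-y₁)) ) ]. Fix y = (y₁,y₂) with y₂ > 0. Then G⁺((x₁,x₂), y) → -y₂ as x₂ → +∞, uniformly in x₁; more precisely there exist constants C, c > 0 (depending on y₂) such that |G⁺((x₁,x₂),y) + y₂| ≤ C e^{-c x₂} for all x₁ ∈ ℝ and all x₂ ≥ y₂ + 1. -/
open Real

lemma key_log_bound (u v : ℝ) (hu : 0 ≤ u) (hu2 : u ≤ 1/2) (hv : 0 ≤ v)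
    (hv4 : v ≤ 4*u) : |Real.log ((1-u)^2 + v)| ≤ 4*u := by
  have h1 : (0:ℝ) < 1 - u := by linarith
  have hP : 0 < (1-u)^2 + v := by positivity
  rw [abs_le]
  constructor
  · -- lower bound: exp(-(4u)) ≤ (1-u)^2 ≤ (1-u)^2 + v
    have h2 : Real.exp (-(2*u)) ≤ 1 - u := by
      have h3 : (1:ℝ) + 2*u ≤ Real.exp (2*u) := by
        have := Real.add_one_le_exp (2*u); linarith
      have h5 : Real.exp (-(2*u)) * Real.exp (2*u) = 1 := by
        rw [← Real.exp_add]; simp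
      nlinarith [Real.exp_pos (2*u), Real.exp_pos (-(2*u))]
    have hexp : Real.exp (-(4*u)) ≤ (1-u)^2 + v := by
      have h6 : Real.exp (-(4*u)) = Real.exp (-(2*u)) * Real.exp (-(2*u)) := by
        rw [← Real.exp_add]; ring_nf
      nlinarith [Real.exp_pos (-(2*u))]
    have := Real.log_le_log (Real.exp_pos (-(4*u))) hexp
    rw [Real.log_exp] at this
    linarith
  · -- upper bound: log x ≤ x - 1
    have := Real.log_le_sub_one_of_pos hP
    nlinarith

lemma sinh_log_asymp (t s : ℝ) (ht : 1 ≤ t) (hs : s^2 ≤ 1) :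
    |Real.log (Real.sinh t ^ 2 + s ^ 2) - (2*t - Real.log 4)| ≤ 4 * Real.exp (-(2*t)) := by
  set u := Real.exp (-(2*t)) with hu_def
  have hu0 : 0 < u := Real.exp_pos _
  have hu2 : u ≤ 1/2 := by
    have h1 : Real.exp (-(2*t)) ≤ Real.exp (-2) := Real.exp_le_exp.mpr (by linarith)
    have h2 : Real.exp (-2 : ℝ) ≤ 1/2 := by
      have h3 : (2:ℝ) ≤ Real.exp 2 := by
        have := Real.add_one_le_exp (2:ℝ); linarith
      have h4 : Real.exp (-2 : ℝ) * Real.exp (2:ℝ) = 1 := by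
        rw [← Real.exp_add]; norm_num
      nlinarith [Real.exp_pos (-2 : ℝ)]
    linarith
  have hEpos : 0 < Real.exp t := Real.exp_pos t
  have hident : Real.sinh t ^ 2 + s ^ 2
      = (Real.exp (2*t) / 4) * ((1-u)^2 + 4*s^2*u) := by
    rw [Real.sinh_eq]
    have hn : Real.exp (-t) = (Real.exp t)⁻¹ := Real.exp_neg t
    have h2t : Real.exp (2*t) = Real.exp t ^ 2 := by
      rw [two_mul, Real.exp_add]; ring
    have hu' : u = (Real.exp t ^ 2)⁻¹ := by
      rw [hu_def, ← h2t, ← Real.exp_neg]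
    rw [hn, h2t, hu']
    field_simp
    ring
  have hP : 0 < (1-u)^2 + 4*s^2*u := by nlinarith [sq_nonneg s, sq_nonneg (1-u)]
  have hlog : Real.log (Real.sinh t ^ 2 + s ^ 2)
      = 2*t - Real.log 4 + Real.log ((1-u)^2 + 4*s^2*u) := by
    rw [hident, Real.log_mul (by positivity) (ne_of_gt hP),
      Real.log_div (Real.exp_ne_zero _) (by norm_num), Real.log_exp]
  have hkey := key_log_bound u (4*s^2*u) hu0.le hu2 (by positivity) (by nlinarith)
  rw [hlog]
  have heq : 2*t - Real.log 4 + Real.log ((1-u)^2 + 4*s^2*u) - (2*t - Real.log 4)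
      = Real.log ((1-u)^2 + 4*s^2*u) := by ring
  rw [heq]
  linarith

/-- Fix `y = (y₁,y₂)` with `y₂ > 0`.  The 1-d periodic half-space Dirichlet Green
function `G⁺((x₁,x₂), y)` tends to `-y₂` as `x₂ → +∞`, uniformly in `x₁`: there are
constants `C, c > 0` such that `|G⁺((x₁,x₂),y) + y₂| ≤ C e^{-c x₂}` for all `x₁ ∈ ℝ`
and all `x₂ ≥ y₂ + 1`. -/
theorem stmt_6 (Gp : ℝ × ℝ → ℝ × ℝ → ℝ)
    (hGp : Gp = fun x y => (1 / (4 * π)) *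
      (Real.log (Real.sinh (π * (x.2 - y.2)) ^ 2 + Real.sin (π * (x.1 - y.1)) ^ 2) -
       Real.log (Real.sinh (π * (x.2 + y.2)) ^ 2 + Real.sin (π * (x.1 - y.1)) ^ 2)))
    (y₁ y₂ : ℝ) (hy₂ : 0 < y₂) :
    ∃ C c : ℝ, 0 < C ∧ 0 < c ∧
      ∀ x₁ x₂ : ℝ, y₂ + 1 ≤ x₂ →
        |Gp (x₁, x₂) (y₁, y₂) + y₂| ≤ C * Real.exp (-c * x₂) := by
  subst hGp
  have hπ : 0 < π := Real.pi_pos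
  refine ⟨(2/π) * Real.exp (2*π*y₂), 2*π, by positivity, by positivity, ?_⟩
  intro x₁ x₂ hx₂
  simp only
  set s := Real.sin (π * (x₁ - y₁)) with hs_def
  have hs : s^2 ≤ 1 := Real.sin_sq_le_one _
  have ha1 : 1 ≤ π * (x₂ - y₂) := by nlinarith [Real.pi_gt_three]
  have hb1 : 1 ≤ π * (x₂ + y₂) := by nlinarith [Real.pi_gt_three]
  have hab : π * (x₂ - y₂) ≤ π * (x₂ + y₂) := by nlinarith
  have hA := sinh_log_asymp (π * (x₂ - y₂)) s ha1 hs
  have hB := sinh_log_asymp (π * (x₂ + y₂)) s hb1 hs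
  set LA := Real.log (Real.sinh (π * (x₂ - y₂)) ^ 2 + s ^ 2) with hLA
  set LB := Real.log (Real.sinh (π * (x₂ + y₂)) ^ 2 + s ^ 2) with hLB
  set EA := LA - (2*(π * (x₂ - y₂)) - Real.log 4) with hEA
  set EB := LB - (2*(π * (x₂ + y₂)) - Real.log 4) with hEB
  have key : (1 / (4*π)) * (LA - LB) + y₂ = (1 / (4*π)) * (EA - EB) := by
    rw [hEA, hEB]
    field_simp
    ring
  have hexpab : Real.exp (-(2*(π * (x₂ + y₂)))) ≤ Real.exp (-(2*(π * (x₂ - y₂)))) :=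
    Real.exp_le_exp.mpr (by linarith)
  have hfinal : Real.exp (-(2*(π * (x₂ - y₂)))) = Real.exp (2*π*y₂) * Real.exp (-(2*π) * x₂) := by
    rw [← Real.exp_add]; ring_nf
  calc |(1 / (4*π)) * (LA - LB) + y₂| = |(1 / (4*π)) * (EA - EB)| := by rw [key]
    _ = (1 / (4*π)) * |EA - EB| := by
        rw [abs_mul, abs_of_pos (by positivity : (0:ℝ) < 1 / (4*π))]
    _ ≤ (1 / (4*π)) * (|EA| + |EB|) := by
        gcongr
        exact abs_sub _ _
    _ ≤ (1 / (4*π)) * (4 * Real.exp (-(2*(π * (x₂ - y₂)))) + 4 * Real.exp (-(2*(π * (x₂ + y₂))))) := by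
        gcongr
    _ ≤ (1 / (4*π)) * (8 * Real.exp (-(2*(π * (x₂ - y₂))))) := by
        gcongr
        linarith
    _ = (2/π) * Real.exp (2*π*y₂) * Real.exp (-(2*π) * x₂) := by
        rw [hfinal]; field_simp; ring
end
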